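/- arXiv:0808.0754 — 2 statements merged into one kernel-verified Lean document; each statement's English description precedes it below -/
import Mathlib

section
/- For all natural numbers i, the Abian product formula computes the powerset encoding: set2nat({ set2nat(T) : T ⊆ nat2set(i) }) = ∏_{k ∈ nat2set(i)} (1 + 2^(2^k)). -/
def set2nat (S : Finset ℕ) : ℕ := ∑ k ∈ S, 2 ^ k

def nat2set (n : ℕ) : Finset ℕ := (Finset.range (n + 1)).filter (fun k => n.testBit k)

theorem abian_powset_formula (i : ℕ) :
    set2nat ((nat2set i).powerset.image set2nat) =
      ∏ k ∈ nat2set i, (1 + 2 ^ (2 ^ k)) := by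
  rw [Finset.prod_add]
  unfold set2nat
  rw [Finset.sum_image (fun a _ b _ h => Finset.geomSum_injective le_rfl h)]
  refine Finset.sum_nbij' (fun t => nat2set i \ t) (fun t => nat2set i \ t) ?_ ?_ ?_ ?_ ?_
  · intro t ht; simp
  · intro t ht; simp
  · intro t ht
    simp only [Finset.mem_powerset] at ht
    exact (Finset.sdiff_sdiff_eq_self ht)
  · intro t ht
    simp only [Finset.mem_powerset] at ht
    exact (Finset.sdiff_sdiff_eq_self ht)
  · intro t ht
    simp only [Finset.mem_powerset] at ht
    rw [Finset.prod_const, one_pow, one_mul, Finset.sdiff_sdiff_eq_self ht,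
      Finset.prod_pow_eq_pow_sum]
end

section
/- Ackermann's encoding transports union: for hereditarily finite sets x and y, f(x ∪ y) = f(x) OR f(y) (bitwise or), and f(x ∩ y) = f(x) AND f(y) (bitwise and). -/
attribute [local instance] Classical.propDecidable

/-- Hereditarily finite sets as finitely-branching rose trees (to be identified
up to extensionality). -/
inductive HF : Type
  | mk : List HF → HF

/-- Extensional equality of hereditarily finite sets. -/
def ExtEq : HF → HF → Prop
  | .mk l, .mk m =>
      (∀ a : {a // a ∈ l}, ∃ b : {b // b ∈ m}, ExtEq a.1 b.1) ∧
      (∀ b : {b // b ∈ m}, ∃ a : {a // a ∈ l}, ExtEq a.1 b.1)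
  termination_by x y => sizeOf x + sizeOf y
  decreasing_by
    all_goals
      have h1 := List.sizeOf_lt_of_mem a.2
      have h2 := List.sizeOf_lt_of_mem b.2
      simp; omega

/-- Membership, up to extensionality. -/
def HFMem (a : HF) : HF → Prop
  | .mk l => ∃ b ∈ l, ExtEq a b

/-- Union of two hereditarily finite sets. -/
def HFUnion : HF → HF → HF
  | .mk l, .mk m => .mk (l ++ m)

/-- Intersection of two hereditarily finite sets. -/
noncomputable
def HFInter : HF → HF → HF
  | .mk l, y => .mk (l.filter (fun a => decide (HFMem a y)))

/-- The Ackermann encoding: `f x = ∑_{a ∈ x} 2^(f a)`. -/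
def ackermann : HF → ℕ
  | .mk l => ∑ k ∈ ((l.attach.map (fun a => ackermann a.1)).toFinset), 2 ^ k
  decreasing_by have := List.sizeOf_lt_of_mem a.2; simp; omega

lemma mem_bitIndices_iff (n a : ℕ) : a ∈ n.bitIndices ↔ n.testBit a := by
  induction n using Nat.binaryRec generalizing a with
  | zero => simp
  | bit b n ih =>
    cases a with
    | zero =>
      rw [Nat.testBit_bit_zero]
      cases b <;> simp [Nat.bitIndices_bit_false, Nat.bitIndices_bit_true]
    | succ a =>
      rw [Nat.testBit_bit_succ, ← ih]
      cases b <;> simp [Nat.bitIndices_bit_false, Nat.bitIndices_bit_true]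

lemma testBit_sum (s : Finset ℕ) (a : ℕ) :
    (∑ i ∈ s, 2 ^ i).testBit a ↔ a ∈ s := by
  rw [← mem_bitIndices_iff, ← List.mem_toFinset, Finset.toFinset_bitIndices_twoPowSum]

lemma testBit_ackermann (l : List HF) (n : ℕ) :
    (ackermann (.mk l)).testBit n ↔ ∃ a ∈ l, ackermann a = n := by
  rw [ackermann, testBit_sum, List.mem_toFinset, List.mem_map]
  constructor
  · rintro ⟨⟨a, ha⟩, -, rfl⟩; exact ⟨a, ha, rfl⟩
  · rintro ⟨a, ha, rfl⟩; exact ⟨⟨a, ha⟩, List.mem_attach _ _, rfl⟩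

theorem extEq_iff : (a b : HF) → (ExtEq a b ↔ ackermann a = ackermann b)
  | .mk l, .mk m => by
    rw [ExtEq]
    constructor
    · rintro ⟨h1, h2⟩
      apply Nat.eq_of_testBit_eq
      intro n
      rw [Bool.eq_iff_iff]
      rw [testBit_ackermann, testBit_ackermann]
      constructor
      · rintro ⟨a, ha, rfl⟩
        obtain ⟨⟨b, hb⟩, hab⟩ := h1 ⟨a, ha⟩
        exact ⟨b, hb, ((extEq_iff a b).1 hab).symm⟩
      · rintro ⟨b, hb, rfl⟩
        obtain ⟨⟨a, ha⟩, hab⟩ := h2 ⟨b, hb⟩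
        exact ⟨a, ha, (extEq_iff a b).1 hab⟩
    · intro h
      have key : ∀ n, ((∃ a ∈ l, ackermann a = n) ↔ (∃ b ∈ m, ackermann b = n)) := by
        intro n
        rw [← testBit_ackermann, ← testBit_ackermann, h]
      constructor
      · rintro ⟨a, ha⟩
        obtain ⟨b, hb, hba⟩ := (key (ackermann a)).1 ⟨a, ha, rfl⟩
        exact ⟨⟨b, hb⟩, (extEq_iff a b).2 hba.symm⟩
      · rintro ⟨b, hb⟩
        obtain ⟨a, ha, hab⟩ := (key (ackermann b)).2 ⟨b, hb, rfl⟩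
        exact ⟨⟨a, ha⟩, (extEq_iff a b).2 hab⟩
  termination_by a b => sizeOf a + sizeOf b
  decreasing_by
    all_goals
      have h1 := List.sizeOf_lt_of_mem ha
      have h2 := List.sizeOf_lt_of_mem hb
      simp; omega

/-- Ackermann's encoding transports union to bitwise or and intersection to
bitwise and. -/
theorem ackermann_union_inter (x y : HF) :
    ackermann (HFUnion x y) = ackermann x ||| ackermann y ∧
    ackermann (HFInter x y) = ackermann x &&& ackermann y := by
  rcases x with ⟨l⟩; rcases y with ⟨m⟩
  constructor
  · apply Nat.eq_of_testBit_eq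
    intro n
    rw [Bool.eq_iff_iff]
    rw [HFUnion, Nat.testBit_lor]
    simp only [Bool.or_eq_true, testBit_ackermann, List.mem_append]
    constructor
    · rintro ⟨a, h | h, rfl⟩
      · exact Or.inl ⟨a, h, rfl⟩
      · exact Or.inr ⟨a, h, rfl⟩
    · rintro (⟨a, h, rfl⟩ | ⟨a, h, rfl⟩)
      · exact ⟨a, Or.inl h, rfl⟩
      · exact ⟨a, Or.inr h, rfl⟩
  · apply Nat.eq_of_testBit_eq
    intro n
    rw [Bool.eq_iff_iff]
    rw [HFInter, Nat.testBit_land]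
    simp only [Bool.and_eq_true, testBit_ackermann, List.mem_filter, decide_eq_true_iff]
    constructor
    · rintro ⟨a, ⟨ha, hmem⟩, rfl⟩
      obtain ⟨b, hb, hab⟩ := hmem
      exact ⟨⟨a, ha, rfl⟩, ⟨b, hb, ((extEq_iff a b).1 hab).symm⟩⟩
    · rintro ⟨⟨a, ha, rfl⟩, ⟨b, hb, hba⟩⟩
      exact ⟨a, ⟨ha, ⟨b, hb, (extEq_iff a b).2 hba.symm⟩⟩, rfl⟩
end
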